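/- Let k be even and let G be a connected k-uniform hypergraph on {1,…,n} with at least one edge. Then the signless Laplacian tensor D+A has a real eigenvector associated with the eigenvalue zero (i.e., there is a nonzero x ∈ ℝ^n with ((D+A) x^{k−1})_i = 0 for all i) if and only if G is odd-bipartite, i.e., there exists a subset S ⊆ V with S ≠ ∅ and V∖S ≠ ∅ such that |e ∩ S| is odd for every edge e ∈ E. -/

import Mathlib

open Finset

/-- Degree of vertex `i` in the hypergraph with edge set `E`. -/
def hdeg {n : ℕ} (E : Finset (Finset (Fin n))) (i : Fin n) : ℕ :=
  (E.filter fun e => i ∈ e).card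

/-- Laplacian tensor action `((D - A) x^{k-1})_i` over ℂ. -/
noncomputable def lapC (k : ℕ) {n : ℕ} (E : Finset (Finset (Fin n)))
    (x : Fin n → ℂ) (i : Fin n) : ℂ :=
  (hdeg E i : ℂ) * x i ^ (k - 1) -
    ∑ e ∈ E.filter (fun e => i ∈ e), ∏ j ∈ e.erase i, x j

/-- Signless Laplacian tensor action `((D + A) x^{k-1})_i` over ℂ. -/
noncomputable def slapC (k : ℕ) {n : ℕ} (E : Finset (Finset (Fin n)))
    (x : Fin n → ℂ) (i : Fin n) : ℂ :=
  (hdeg E i : ℂ) * x i ^ (k - 1) +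
    ∑ e ∈ E.filter (fun e => i ∈ e), ∏ j ∈ e.erase i, x j

/-- Laplacian tensor action `((D - A) x^{k-1})_i` over ℝ. -/
noncomputable def lapR (k : ℕ) {n : ℕ} (E : Finset (Finset (Fin n)))
    (x : Fin n → ℝ) (i : Fin n) : ℝ :=
  (hdeg E i : ℝ) * x i ^ (k - 1) -
    ∑ e ∈ E.filter (fun e => i ∈ e), ∏ j ∈ e.erase i, x j

/-- Signless Laplacian tensor action `((D + A) x^{k-1})_i` over ℝ. -/
noncomputable def slapR (k : ℕ) {n : ℕ} (E : Finset (Finset (Fin n)))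
    (x : Fin n → ℝ) (i : Fin n) : ℝ :=
  (hdeg E i : ℝ) * x i ^ (k - 1) +
    ∑ e ∈ E.filter (fun e => i ∈ e), ∏ j ∈ e.erase i, x j

/-- The hypergraph with edge set `E` is connected: every pair of distinct vertices is
joined by a chain of edges with consecutive edges intersecting. -/
def HConnected {n : ℕ} (E : Finset (Finset (Fin n))) : Prop :=
  ∀ i j : Fin n, i ≠ j → ∃ m : ℕ, ∃ es : Fin (m + 1) → Finset (Fin n),
    (∀ r, es r ∈ E) ∧ i ∈ es 0 ∧ j ∈ es (Fin.last m) ∧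
    ∀ r : Fin m, (es r.castSucc ∩ es r.succ).Nonempty

-- AM-GM
lemma amgm {ι : Type*} (s : Finset ι) (k : ℕ) (hcard : s.card = k) (hk : 0 < k)
    (x : ι → ℝ) : (k:ℝ) * ∏ j ∈ s, |x j| ≤ ∑ j ∈ s, |x j| ^ k := by
  have hkR : (0:ℝ) < k := by exact_mod_cast hk
  have h := Real.geom_mean_le_arith_mean_weighted s (fun _ => (k:ℝ)⁻¹)
    (fun j => |x j| ^ k) (fun i _ => by positivity)
    (by simp [hcard]; field_simp) (fun i _ => by positivity)
  have h2 : ∀ j ∈ s, ((|x j| ^ k : ℝ)) ^ ((k:ℝ)⁻¹) = |x j| := by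
    intro j _
    rw [← Real.rpow_natCast |x j| k, ← Real.rpow_mul (abs_nonneg _),
      mul_inv_cancel₀ (by positivity), Real.rpow_one]
  rw [Finset.prod_congr rfl h2] at h
  calc (k:ℝ) * ∏ j ∈ s, |x j| ≤ (k:ℝ) * ∑ i ∈ s, (k:ℝ)⁻¹ * |x i| ^ k := by
        exact mul_le_mul_of_nonneg_left h (le_of_lt hkR)
    _ = ∑ j ∈ s, |x j| ^ k := by
        rw [← Finset.mul_sum, ← mul_assoc, mul_inv_cancel₀ (ne_of_gt hkR), one_mul]

-- sign decomposition
lemma prod_sign_odd {ι : Type*} [DecidableEq ι] (s : Finset ι) (x : ι → ℝ)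
    (h : ∏ j ∈ s, x j < 0) : Odd (s.filter fun j => x j < 0).card := by
  have hdecomp : ∏ j ∈ s, x j = (-1:ℝ)^(s.filter fun j => x j < 0).card * ∏ j ∈ s, |x j| := by
    rw [← Finset.prod_const, ← Finset.prod_filter_mul_prod_filter_not s (fun j => x j < 0) (fun j => |x j|), ← mul_assoc, ← Finset.prod_mul_distrib,
      ← Finset.prod_filter_mul_prod_filter_not s (fun j => x j < 0) x]
    congr 1
    · exact Finset.prod_congr rfl fun j hj => by
        have := (Finset.mem_filter.1 hj).2; rw [abs_of_neg this]; ring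
    · exact Finset.prod_congr rfl fun j hj => by
        have := (Finset.mem_filter.1 hj).2
        rw [abs_of_nonneg (not_lt.1 this)]
  rcases Nat.even_or_odd (s.filter fun j => x j < 0).card with he | ho
  · exfalso
    rw [hdecomp, he.neg_one_pow, one_mul] at h
    exact absurd h (not_lt.2 (Finset.prod_nonneg fun j _ => abs_nonneg _))
  · exact ho

lemma double_sum_eq {n : ℕ} (E : Finset (Finset (Fin n))) (f : Fin n → Finset (Fin n) → ℝ) :
    ∑ i, ∑ e ∈ E.filter (fun e => i ∈ e), f i e = ∑ e ∈ E, ∑ i ∈ e, f i e := by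
  simp_rw [Finset.sum_filter]
  rw [Finset.sum_comm]
  refine Finset.sum_congr rfl fun e _ => ?_
  rw [Finset.sum_ite_mem, Finset.univ_inter]

lemma sum_mul_slap {n k : ℕ} (hk : 1 ≤ k) (E : Finset (Finset (Fin n)))
    (hE : ∀ e ∈ E, e.card = k) (x : Fin n → ℝ) :
    ∑ i, x i * slapR k E x i = ∑ e ∈ E, (∑ j ∈ e, x j ^ k + (k:ℝ) * ∏ j ∈ e, x j) := by
  have hpow : ∀ a : ℝ, a * a ^ (k-1) = a ^ k := by
    intro a
    conv_rhs => rw [show k = (k-1)+1 from by omega]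
    rw [pow_succ]; ring
  have step1 : ∀ i, x i * slapR k E x i
      = ∑ e ∈ E.filter (fun e => i ∈ e), (x i ^ k + ∏ j ∈ e, x j) := by
    intro i
    unfold slapR hdeg
    rw [Finset.sum_add_distrib, Finset.sum_const, nsmul_eq_mul, mul_add, Finset.mul_sum]
    congr 1
    · rw [← mul_assoc, mul_comm (x i) ((E.filter fun e => i ∈ e).card : ℝ), mul_assoc, hpow]
    · refine Finset.sum_congr rfl fun e he => ?_
      exact Finset.mul_prod_erase e x (Finset.mem_filter.1 he).2
  simp_rw [step1]
  rw [double_sum_eq]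
  refine Finset.sum_congr rfl fun e he => ?_
  rw [Finset.sum_add_distrib, Finset.sum_const, hE e he, nsmul_eq_mul]

theorem stmt_11 {n k : ℕ} (hk : 3 ≤ k) (hn : k ≤ n) (hkeven : Even k)
    (E : Finset (Finset (Fin n))) (hE : ∀ e ∈ E, e.card = k)
    (hconn : HConnected E) (hne : E.Nonempty) :
    (∃ x : Fin n → ℝ, x ≠ 0 ∧ ∀ i, slapR k E x i = 0) ↔
      ∃ S : Finset (Fin n), S.Nonempty ∧ Sᶜ.Nonempty ∧
        ∀ e ∈ E, Odd (e ∩ S).card := by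
  have hk0 : 0 < k := by omega
  have hkodd : Odd (k - 1) := Nat.Even.sub_odd (by omega) hkeven odd_one
  constructor
  · rintro ⟨x, hx0, hslap⟩
    -- each edge term is nonneg
    have hnonneg : ∀ e ∈ E, (0:ℝ) ≤ ∑ j ∈ e, x j ^ k + (k:ℝ) * ∏ j ∈ e, x j := by
      intro e he
      have h1 : ∑ j ∈ e, x j ^ k = ∑ j ∈ e, |x j| ^ k :=
        Finset.sum_congr rfl fun j _ => (hkeven.pow_abs (x j)).symm
      have h2 : (k:ℝ) * ∏ j ∈ e, |x j| ≤ ∑ j ∈ e, |x j| ^ k :=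
        amgm e k (hE e he) hk0 x
      have h3 : -(∏ j ∈ e, |x j|) ≤ ∏ j ∈ e, x j := by
        rw [← Finset.abs_prod]
        exact neg_abs_le _
      have hk' : (0:ℝ) ≤ k := by positivity
      nlinarith [h2, h3, mul_le_mul_of_nonneg_left h3 hk']
    -- total is zero, so each term is zero
    have htotal : ∑ e ∈ E, (∑ j ∈ e, x j ^ k + (k:ℝ) * ∏ j ∈ e, x j) = 0 := by
      rw [← sum_mul_slap (by omega) E hE x]
      simp [hslap]
    have hzero : ∀ e ∈ E, ∑ j ∈ e, x j ^ k + (k:ℝ) * ∏ j ∈ e, x j = 0 :=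
      (Finset.sum_eq_zero_iff_of_nonneg hnonneg).1 htotal
    -- product negative if some vertex nonzero
    have hneg : ∀ e ∈ E, ∀ i ∈ e, x i ≠ 0 → ∏ j ∈ e, x j < 0 := by
      intro e he i hi hxi
      have hsum : (0:ℝ) < ∑ j ∈ e, x j ^ k := by
        have hpos : (0:ℝ) < x i ^ k := by
          rw [← hkeven.pow_abs]
          exact pow_pos (abs_pos.2 hxi) k
        refine lt_of_lt_of_le hpos
          (Finset.single_le_sum (f := fun j => x j ^ k) (fun j _ => ?_) hi)
        show (0:ℝ) ≤ x j ^ k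
        rw [← hkeven.pow_abs]; positivity
      have := hzero e he
      have hkR : (0:ℝ) < k := by positivity
      nlinarith
    have hprop : ∀ e ∈ E, ∀ i ∈ e, x i ≠ 0 → ∀ j ∈ e, x j ≠ 0 := by
      intro e he i hi hxi j hj
      have := hneg e he i hi hxi
      have hne0 : ∏ j ∈ e, x j ≠ 0 := ne_of_lt this
      exact fun h => hne0 (Finset.prod_eq_zero hj h)
    -- some vertex nonzero
    obtain ⟨i0, hi0⟩ := Function.ne_iff.1 hx0
    have hi0' : x i0 ≠ 0 := hi0
    -- every vertex has nonzero x
    have hall : ∀ v : Fin n, x v ≠ 0 := by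
      intro v
      by_cases hv : v = i0
      · subst hv; exact hi0'
      obtain ⟨m, es, hesE, hi0mem, hvmem, hinter⟩ := hconn i0 v (Ne.symm hv)
      have key : ∀ r : ℕ, ∀ h : r < m + 1, ∀ j ∈ es ⟨r, h⟩, x j ≠ 0 := by
        intro r
        induction r with
        | zero =>
          intro h j hj
          exact hprop _ (hesE ⟨0, h⟩) i0 hi0mem hi0' j hj
        | succ r ih =>
          intro h j hj
          have hrm : r < m := by omega
          have hr : r < m + 1 := by omega
          obtain ⟨a, ha⟩ := hinter ⟨r, hrm⟩
          rw [Finset.mem_inter] at ha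
          have e1 : (⟨r, hrm⟩ : Fin m).castSucc = (⟨r, hr⟩ : Fin (m+1)) := rfl
          have e2 : (⟨r, hrm⟩ : Fin m).succ = (⟨r+1, h⟩ : Fin (m+1)) := rfl
          rw [e1, e2] at ha
          have hxa : x a ≠ 0 := ih hr a ha.1
          exact hprop _ (hesE ⟨r+1, h⟩) a ha.2 hxa j hj
      have : es (Fin.last m) = es ⟨m, by omega⟩ := rfl
      exact key m (by omega) v (this ▸ hvmem)
    -- define S
    refine ⟨univ.filter (fun i => x i < 0), ?_, ?_, ?_⟩
    · obtain ⟨e, he⟩ := hne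
      have hprodneg : ∏ j ∈ e, x j < 0 := by
        have hcard : e.card = k := hE e he
        have : e.Nonempty := Finset.card_pos.1 (by omega)
        obtain ⟨i, hi⟩ := this
        exact hneg e he i hi (hall i)
      have hodd := prod_sign_odd e x hprodneg
      obtain ⟨j, hj⟩ : (e.filter fun j => x j < 0).Nonempty := by
        rw [← Finset.card_pos]
        rcases hodd with ⟨c, hc⟩; omega
      exact ⟨j, Finset.mem_filter.2 ⟨Finset.mem_univ j, (Finset.mem_filter.1 hj).2⟩⟩
    · obtain ⟨e, he⟩ := hne
      have hprodneg : ∏ j ∈ e, x j < 0 := by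
        have hcard : e.card = k := hE e he
        have : e.Nonempty := Finset.card_pos.1 (by omega)
        obtain ⟨i, hi⟩ := this
        exact hneg e he i hi (hall i)
      have hodd := prod_sign_odd e x hprodneg
      have hlt : (e.filter fun j => x j < 0).card < e.card := by
        have hle := Finset.card_filter_le e (fun j => x j < 0)
        rcases lt_or_eq_of_le hle with h | h
        · exact h
        · exfalso
          rw [h, hE e he] at hodd
          exact (Nat.not_odd_iff_even.2 hkeven) hodd
      have hss : (e.filter fun j => x j < 0) ⊂ e :=
        Finset.ssubset_iff_subset_ne.2 ⟨Finset.filter_subset _ _,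
          fun h => by rw [h] at hlt; exact lt_irrefl _ hlt⟩
      obtain ⟨j, hje, hjnot⟩ := Finset.exists_of_ssubset hss
      refine ⟨j, Finset.mem_compl.2 ?_⟩
      intro hmem
      exact hjnot (Finset.mem_filter.2 ⟨hje, (Finset.mem_filter.1 hmem).2⟩)
    · intro e he
      have hprodneg : ∏ j ∈ e, x j < 0 := by
        have : e.Nonempty := Finset.card_pos.1 (by rw [hE e he]; omega)
        obtain ⟨i, hi⟩ := this
        exact hneg e he i hi (hall i)
      have hodd := prod_sign_odd e x hprodneg
      have : e ∩ univ.filter (fun i => x i < 0) = e.filter fun j => x j < 0 := by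
        ext a; simp [Finset.mem_inter, Finset.mem_filter]
      rw [this]
      exact hodd
  · rintro ⟨S, hS, hSc, hodd⟩
    refine ⟨fun i => if i ∈ S then (-1:ℝ) else 1, ?_, ?_⟩
    · obtain ⟨i0, hi0⟩ := hS
      intro h
      have := congrFun h i0
      simp [hi0] at this
    · intro i
      unfold slapR hdeg
      have hprod : ∀ e ∈ E.filter (fun e => i ∈ e),
          ∏ j ∈ e.erase i, (if j ∈ S then (-1:ℝ) else 1)
            = (-1:ℝ) ^ ((e ∩ S).erase i).card := by
        intro e he
        rw [Finset.prod_ite_mem]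
        rw [Finset.prod_const]
        congr 2
        ext a
        simp only [Finset.mem_inter, Finset.mem_erase]
        tauto
      rw [Finset.sum_congr rfl hprod]
      by_cases hiS : i ∈ S
      · rw [show (fun i => if i ∈ S then (-1:ℝ) else 1) i = -1 from by simp [hiS]]
        have hpow : (-1:ℝ) ^ (k-1) = -1 := hkodd.neg_one_pow
        rw [hpow]
        have hterm : ∀ e ∈ E.filter (fun e => i ∈ e),
            (-1:ℝ) ^ ((e ∩ S).erase i).card = 1 := by
          intro e he
          rcases Finset.mem_filter.1 he with ⟨heE, hie⟩
          have hmem : i ∈ e ∩ S := Finset.mem_inter.2 ⟨hie, hiS⟩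
          rw [Finset.card_erase_of_mem hmem]
          have := hodd e heE
          have heven : Even ((e ∩ S).card - 1) := by
            rcases this with ⟨c, hc⟩
            exact ⟨c, by omega⟩
          exact heven.neg_one_pow
        rw [Finset.sum_congr rfl hterm, Finset.sum_const, nsmul_eq_mul, mul_one]
        ring
      · rw [show (fun i => if i ∈ S then (-1:ℝ) else 1) i = 1 from by simp [hiS],
          one_pow, mul_one]
        have hterm : ∀ e ∈ E.filter (fun e => i ∈ e),
            (-1:ℝ) ^ ((e ∩ S).erase i).card = -1 := by
          intro e he
          rcases Finset.mem_filter.1 he with ⟨heE, hie⟩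
          have hmem : i ∉ e ∩ S := fun h => hiS (Finset.mem_inter.1 h).2
          rw [Finset.erase_eq_of_notMem hmem]
          exact (hodd e heE).neg_one_pow
        rw [Finset.sum_congr rfl hterm, Finset.sum_const, nsmul_eq_mul, mul_neg_one]
        ring
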